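/- For any unit vector e and any vectors x, y in a complex Hilbert space H, |⟨x,y⟩| ≤ |⟨x,e⟩|·|⟨e,y⟩| + √(‖x‖² − |⟨x,e⟩|²)·√(‖y‖² − |⟨y,e⟩|²) ≤ ‖x‖‖y‖. -/

import Mathlib

open scoped InnerProductSpace

lemma aux_norm_resid {H : Type*} [NormedAddCommGroup H] [InnerProductSpace ℂ H]
    (e : H) (he : ‖e‖ = 1) (x : H) :
    ‖x - ⟪e, x⟫_ℂ • e‖ ^ 2 = ‖x‖ ^ 2 - ‖⟪x, e⟫_ℂ‖ ^ 2 := by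
  have h := norm_sub_sq (𝕜 := ℂ) x (⟪e, x⟫_ℂ • e)
  have h2 : ⟪x, ⟪e, x⟫_ℂ • e⟫_ℂ = ⟪e, x⟫_ℂ * ⟪x, e⟫_ℂ := by
    rw [inner_smul_right]
  have h3 : ⟪e, x⟫_ℂ = starRingEnd ℂ ⟪x, e⟫_ℂ := by
    rw [← inner_conj_symm]
  have h4 : RCLike.re (⟪x, ⟪e, x⟫_ℂ • e⟫_ℂ) = ‖⟪x, e⟫_ℂ‖ ^ 2 := by
    rw [h2, h3, Complex.conj_mul']
    rw [Complex.sq_norm]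
    norm_cast
    simp [Complex.sq_norm]
  have h5 : ‖⟪e, x⟫_ℂ • e‖ = ‖⟪x, e⟫_ℂ‖ := by
    rw [norm_smul, he, mul_one]
    exact norm_inner_symm e x
  rw [h5, h4] at h
  rw [h]; ring

theorem refined_cauchy_schwarz_unit {H : Type*} [NormedAddCommGroup H]
    [InnerProductSpace ℂ H] [CompleteSpace H] (e : H) (he : ‖e‖ = 1) (x y : H) :
    ‖⟪x, y⟫_ℂ‖ ≤
      ‖⟪x, e⟫_ℂ‖ * ‖⟪e, y⟫_ℂ‖ +
        Real.sqrt (‖x‖ ^ 2 - ‖⟪x, e⟫_ℂ‖ ^ 2) *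
          Real.sqrt (‖y‖ ^ 2 - ‖⟪y, e⟫_ℂ‖ ^ 2) ∧
    ‖⟪x, e⟫_ℂ‖ * ‖⟪e, y⟫_ℂ‖ +
        Real.sqrt (‖x‖ ^ 2 - ‖⟪x, e⟫_ℂ‖ ^ 2) *
          Real.sqrt (‖y‖ ^ 2 - ‖⟪y, e⟫_ℂ‖ ^ 2) ≤ ‖x‖ * ‖y‖ := by
  have hee : ⟪e, e⟫_ℂ = 1 := by
    rw [@inner_self_eq_norm_sq_to_K ℂ, he]; norm_num
  set x' := x - ⟪e, x⟫_ℂ • e with hx'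
  set y' := y - ⟪e, y⟫_ℂ • e with hy'
  have hxe : ‖⟪e, x⟫_ℂ‖ = ‖⟪x, e⟫_ℂ‖ := norm_inner_symm e x
  have hye : ‖⟪e, y⟫_ℂ‖ = ‖⟪y, e⟫_ℂ‖ := norm_inner_symm e y
  have hX : ‖x'‖ ^ 2 = ‖x‖ ^ 2 - ‖⟪x, e⟫_ℂ‖ ^ 2 := aux_norm_resid e he x
  have hY : ‖y'‖ ^ 2 = ‖y‖ ^ 2 - ‖⟪y, e⟫_ℂ‖ ^ 2 := aux_norm_resid e he y
  have hXs : Real.sqrt (‖x‖ ^ 2 - ‖⟪x, e⟫_ℂ‖ ^ 2) = ‖x'‖ := by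
    rw [← hX, Real.sqrt_sq (norm_nonneg _)]
  have hYs : Real.sqrt (‖y‖ ^ 2 - ‖⟪y, e⟫_ℂ‖ ^ 2) = ‖y'‖ := by
    rw [← hY, Real.sqrt_sq (norm_nonneg _)]
  have key : ⟪x, y⟫_ℂ = ⟪x, e⟫_ℂ * ⟪e, y⟫_ℂ + ⟪x', y'⟫_ℂ := by
    have : ⟪x', y'⟫_ℂ = ⟪x, y⟫_ℂ - ⟪x, e⟫_ℂ * ⟪e, y⟫_ℂ := by
      rw [hx', hy']
      rw [inner_sub_left, inner_sub_right, inner_sub_right, inner_smul_left,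
        inner_smul_left, inner_smul_right, inner_smul_right, hee]
      rw [← inner_conj_symm x e]
      ring
    rw [this]; ring
  rw [hXs, hYs]
  constructor
  · calc ‖⟪x, y⟫_ℂ‖ ≤ ‖⟪x, e⟫_ℂ * ⟪e, y⟫_ℂ‖ + ‖⟪x', y'⟫_ℂ‖ := by
          rw [key]; exact norm_add_le _ _
    _ ≤ ‖⟪x, e⟫_ℂ‖ * ‖⟪e, y⟫_ℂ‖ + ‖x'‖ * ‖y'‖ := by
          rw [norm_mul]
          exact add_le_add le_rfl (norm_inner_le_norm x' y')
  · have hax : ‖⟪x, e⟫_ℂ‖ ≤ ‖x‖ := by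
      have := norm_inner_le_norm (𝕜 := ℂ) x e
      rwa [he, mul_one] at this
    have hay : ‖⟪e, y⟫_ℂ‖ ≤ ‖y‖ := by
      have := norm_inner_le_norm (𝕜 := ℂ) e y
      rwa [he, one_mul] at this
    have hXnn := norm_nonneg x'
    have hYnn := norm_nonneg y'
    have h1 : ‖x'‖ ^ 2 + ‖⟪x, e⟫_ℂ‖ ^ 2 = ‖x‖ ^ 2 := by rw [hX]; ring
    have h2 : ‖y'‖ ^ 2 + ‖⟪e, y⟫_ℂ‖ ^ 2 = ‖y‖ ^ 2 := by rw [hY, ← hye]; ring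
    nlinarith [sq_nonneg (‖⟪x, e⟫_ℂ‖ * ‖y'‖ - ‖⟪e, y⟫_ℂ‖ * ‖x'‖),
      norm_nonneg (⟪x, e⟫_ℂ), norm_nonneg (⟪e, y⟫_ℂ), norm_nonneg x, norm_nonneg y,
      mul_nonneg (norm_nonneg x) (norm_nonneg y)]
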